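/- Let P be a finite poset with n ≥ 2 elements that is (2+2)-free, (1+1+1)-free, and irreducible with respect to ordinal sum. For x ∈ P let U(x) = {y ∈ P : y > x} denote the upset of x. Then P has exactly two maximal elements, and for any two distinct non-maximal elements x ≠ y one has U(x) ≠ U(y); consequently the set {U(x) : x ∈ P} has exactly n − 1 elements. -/

import Mathlib

/-- `P` is `(2+2)`-free: there are no four distinct elements `a, b, c, d` with `a < b` and
`c < d` such that each of `a, b` is incomparable with each of `c, d`. -/
def TwoTwoFree (P : Type*) [PartialOrder P] : Prop :=
  ¬ ∃ a b c d : P, a < b ∧ c < d ∧ a ≠ c ∧ a ≠ d ∧ b ≠ c ∧ b ≠ d ∧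
    ¬ a ≤ c ∧ ¬ c ≤ a ∧ ¬ a ≤ d ∧ ¬ d ≤ a ∧ ¬ b ≤ c ∧ ¬ c ≤ b ∧ ¬ b ≤ d ∧ ¬ d ≤ b

/-- `P` is `(1+1+1)`-free: `P` contains no antichain of three elements. -/
def OneOneOneFree (P : Type*) [PartialOrder P] : Prop :=
  ¬ ∃ a b c : P, a ≠ b ∧ a ≠ c ∧ b ≠ c ∧
    ¬ a ≤ b ∧ ¬ b ≤ a ∧ ¬ a ≤ c ∧ ¬ c ≤ a ∧ ¬ b ≤ c ∧ ¬ c ≤ b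

/-- `P` is irreducible with respect to ordinal sum: `P` cannot be partitioned into two
nonempty subsets `A, B` such that `a < b` for every `a ∈ A` and `b ∈ B`. -/
def OrdinalSumIrreducible (P : Type*) [PartialOrder P] : Prop :=
  ¬ ∃ A B : Set P, A.Nonempty ∧ B.Nonempty ∧ Disjoint A B ∧ A ∪ B = Set.univ ∧
    ∀ a ∈ A, ∀ b ∈ B, a < b

/-- A finite `{(2+2),(1+1+1)}`-free poset with `n ≥ 2` elements that is irreducible with
respect to ordinal sum has exactly two maximal elements, distinct non-maximal elements have
distinct upsets `U(x) = {y : y > x}`, and the set of upsets has exactly `n − 1` elements. -/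
theorem statement9 {P : Type*} [PartialOrder P] [Fintype P]
    (hn : 2 ≤ Fintype.card P)
    (h22 : TwoTwoFree P) (h111 : OneOneOneFree P) (hirr : OrdinalSumIrreducible P) :
    Nat.card {x : P // IsMax x} = 2 ∧
    (∀ x y : P, ¬ IsMax x → ¬ IsMax y → x ≠ y → {z : P | x < z} ≠ {z : P | y < z}) ∧
    Nat.card {s : Set P // ∃ x : P, s = {z : P | x < z}} = Fintype.card P - 1 := by
  classical
  have hne : Nonempty P := by rw [← Fintype.card_pos_iff]; omega
  -- every element is below a maximal element
  have hmaxex : ∀ x : P, ∃ m, x ≤ m ∧ IsMax m := by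
    intro x
    obtain ⟨m, hle, hm⟩ := Finite.exists_le_maximal (p := fun _ : P => True) trivial
    exact ⟨m, hle, fun y hy => hm.2 trivial hy⟩
  -- the key injectivity claim for non-maximal elements
  have hkey : ∀ x y : P, ¬ IsMax x → ¬ IsMax y → x ≠ y →
      {z : P | x < z} ≠ {z : P | y < z} := by
    intro x y hx hy hxy hU
    have hUy : ∀ z : P, x < z ↔ y < z := fun z => by
      constructor <;> intro h
      · have : z ∈ {z : P | y < z} := hU ▸ h; exact this
      · have : z ∈ {z : P | x < z} := hU.symm ▸ h; exact this
    -- x and y are incomparable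
    have hxley : ¬ x ≤ y := by
      intro h
      exact lt_irrefl y ((hUy y).mp (lt_of_le_of_ne h hxy))
    have hylex : ¬ y ≤ x := by
      intro h
      exact lt_irrefl x ((hUy x).mpr (lt_of_le_of_ne h (Ne.symm hxy)))
    -- x is not maximal, so the common upset is nonempty
    obtain ⟨b, hxb, hbx⟩ : ∃ b, x ≤ b ∧ ¬ b ≤ x := by
      by_contra h; push_neg at h; exact hx (fun c hc => h c hc)
    have hxltb : x < b := lt_of_le_not_ge hxb hbx
    apply hirr
    refine ⟨{z : P | ¬ x < z}, {z : P | x < z}, ⟨x, lt_irrefl x⟩, ⟨b, hxltb⟩, ?_, ?_, ?_⟩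
    · rw [Set.disjoint_left]; intro z hz hz'; exact hz hz'
    · ext z; simp [em']
    · intro a ha c hc
      simp only [Set.mem_setOf_eq] at ha hc
      by_cases hax : a = x
      · exact hax ▸ hc
      by_cases hay : a = y
      · exact hay ▸ (hUy c).mp hc
      -- a is comparable with x or y
      have hcomp : a ≤ x ∨ x ≤ a ∨ a ≤ y ∨ y ≤ a := by
        by_contra h; push_neg at h
        exact h111 ⟨x, y, a, hxy, Ne.symm hax, Ne.symm hay,
          hxley, hylex, h.2.1, h.1, h.2.2.2, h.2.2.1⟩
      rcases hcomp with h | h | h | h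
      · exact lt_of_le_of_lt h hc
      · exact absurd (lt_of_le_of_ne h (Ne.symm hax)) ha
      · exact lt_trans (lt_of_le_of_ne h hay) ((hUy c).mp hc)
      · exact absurd ((hUy a).mpr (lt_of_le_of_ne h (fun e => hay e.symm))) ha
  -- there exist two distinct maximal elements
  obtain ⟨m₁, _, hm₁⟩ := hmaxex (Classical.arbitrary P)
  have h2m : ∃ m₂ : P, IsMax m₂ ∧ m₂ ≠ m₁ := by
    by_contra h
    push_neg at h
    obtain ⟨x, hx⟩ := Fintype.exists_ne_of_one_lt_card (by omega) m₁
    apply hirr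
    refine ⟨{z : P | z ≠ m₁}, {m₁}, ⟨x, hx⟩, ⟨m₁, rfl⟩, ?_, ?_, ?_⟩
    · rw [Set.disjoint_left]; intro z hz hz'; exact hz hz'
    · ext z; by_cases h' : z = m₁ <;> simp [h']
    · intro a ha c hc
      rw [Set.mem_singleton_iff] at hc
      subst hc
      obtain ⟨m, ham, hm⟩ := hmaxex a
      have := h m hm
      exact lt_of_le_of_ne (this ▸ ham) ha
  obtain ⟨m₂, hm₂, hm₂₁⟩ := h2m
  -- any maximal element equals m₁ or m₂
  have hmaxeq : ∀ m : P, IsMax m → m = m₁ ∨ m = m₂ := by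
    intro m hm
    by_contra h
    push_neg at h
    have incomp : ∀ a b : P, IsMax a → IsMax b → a ≠ b → ¬ a ≤ b := by
      intro a b ha hb hab hle
      exact hab (le_antisymm hle (ha hle))
    exact h111 ⟨m, m₁, m₂, h.1, h.2, hm₂₁.symm,
      incomp m m₁ hm hm₁ h.1, incomp m₁ m hm₁ hm h.1.symm,
      incomp m m₂ hm hm₂ h.2, incomp m₂ m hm₂ hm h.2.symm,
      incomp m₁ m₂ hm₁ hm₂ hm₂₁.symm, incomp m₂ m₁ hm₂ hm₁ hm₂₁⟩
  have hcard2 : Nat.card {x : P // IsMax x} = 2 := by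
    rw [Nat.card_eq_two_iff]
    refine ⟨⟨m₁, hm₁⟩, ⟨m₂, hm₂⟩, by simp [hm₂₁.symm], ?_⟩
    ext ⟨m, hm⟩
    simp only [Set.mem_insert_iff, Set.mem_singleton_iff, Set.mem_univ, iff_true]
    rcases hmaxeq m hm with h | h <;> [left; right] <;> exact Subtype.ext h
  refine ⟨hcard2, hkey, ?_⟩
  -- counting the upsets
  set g : P → Set P := fun x => {z : P | x < z} with hg
  have hmaxempty : ∀ m : P, IsMax m → g m = ∅ := by
    intro m hm
    ext z
    simp only [hg, Set.mem_setOf_eq, Set.mem_empty_iff_false, iff_false]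
    intro h
    exact absurd (hm h.le) (not_le_of_gt h)
  have hnonmaxne : ∀ x : P, ¬ IsMax x → (g x).Nonempty := by
    intro x hx
    obtain ⟨b, hxb, hbx⟩ : ∃ b, x ≤ b ∧ ¬ b ≤ x := by
      by_contra h; push_neg at h; exact hx (fun c hc => h c hc)
    exact ⟨b, lt_of_le_not_ge hxb hbx⟩
  have hSeq : {s : Set P | ∃ x : P, s = {z : P | x < z}} =
      insert ∅ (g '' {x : P | ¬ IsMax x}) := by
    ext s
    simp only [Set.mem_setOf_eq, Set.mem_insert_iff, Set.mem_image]
    constructor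
    · rintro ⟨x, rfl⟩
      by_cases hx : IsMax x
      · exact Or.inl (hmaxempty x hx)
      · exact Or.inr ⟨x, hx, rfl⟩
    · rintro (rfl | ⟨x, _, rfl⟩)
      · exact ⟨m₁, (hmaxempty m₁ hm₁).symm⟩
      · exact ⟨x, rfl⟩
  have hninj : Set.InjOn g {x : P | ¬ IsMax x} := by
    intro a ha b hb hab
    by_contra h
    exact hkey a b ha hb h hab
  have hnotmem : ∅ ∉ g '' {x : P | ¬ IsMax x} := by
    rintro ⟨x, hx, hgx⟩
    obtain ⟨b, hb⟩ := hnonmaxne x hx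
    rw [hgx] at hb
    exact hb
  have hcardmax : ({x : P | IsMax x} : Set P).ncard = 2 := by
    rw [← Nat.card_coe_set_eq]
    exact hcard2
  have hcompl : ({x : P | ¬ IsMax x} : Set P).ncard = Fintype.card P - 2 := by
    have h1 := Set.ncard_add_ncard_compl ({x : P | IsMax x} : Set P)
    have h2 : ({x : P | IsMax x} : Set P)ᶜ = {x : P | ¬ IsMax x} := by
      ext z; simp
    rw [hcardmax, h2, Nat.card_eq_fintype_card] at h1
    omega
  have : Nat.card {s : Set P // ∃ x : P, s = {z : P | x < z}} =
      ({s : Set P | ∃ x : P, s = {z : P | x < z}} : Set (Set P)).ncard :=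
    Nat.card_coe_set_eq _
  rw [this, hSeq, Set.ncard_insert_of_notMem hnotmem (Set.toFinite _),
    Set.ncard_image_of_injOn hninj, hcompl]
  omega
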